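/- Let i, j ≥ 1 and let a ∈ M(p₁,p₂,q) satisfy d0(a) = 0. Let (a_0, …, a_{2i−1}) be a d_i-sequence in direction r starting at a, let (x_0, …, x_{2j−1}) be a d_j-sequence in direction s starting at a, let (c_0, …, c_{2i−1}) be a d_i-sequence in direction r starting at x_{2j−1} ∈ M(p₁,p₂+j,q−j+1), and let (z_0, …, z_{2j−1}) be a d_j-sequence in direction s starting at a_{2i−1} ∈ M(p₁+i,p₂,q−i+1). Assume the complex is d0-exact at every position (p₁+m, p₂+m') with 0 ≤ m ≤ i, 0 ≤ m' ≤ j and (m,m') different from both (0,0) and (i,j). Then c_{2i−1} + z_{2j−1} lies in the image of d0 : M(p₁+i, p₂+j, q−i−j+1) → M(p₁+i, p₂+j, q−i−j+2). (This expresses the anticommutation d_i^{(r)} d_j^{(s)} + d_j^{(s)} d_i^{(r)} = 0 of the higher differentials on vertical cohomology classes.) -/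

import Mathlib

/-- The triple complex (given by a family of submodules `M p₁ p₂ q` of an ambient module `V`,
with pairwise anticommuting differentials `d0`, `dr`, `ds`) is `d0`-exact at position
`(p₁', p₂')`: every `d0`-cycle in `M p₁' p₂' q'` is a `d0`-boundary of an element of
`M p₁' p₂' (q'-1)`. -/
def D0Exact3 {R V : Type*} [Ring R] [AddCommGroup V] [Module R V]
    (M : ℤ → ℤ → ℤ → Submodule R V) (d0 : V →ₗ[R] V) (p₁ p₂ : ℤ) : Prop :=
  ∀ q' : ℤ, ∀ x ∈ M p₁ p₂ q', d0 x = 0 → ∃ y ∈ M p₁ p₂ (q' - 1), d0 y = x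

/-- A `d_i`-sequence in direction `r` starting at `a ∈ M p₁ p₂ q`, encoded by its even part
`ae` (with `a_{2m} = ae m ∈ M (p₁+m) p₂ (q-m)`) and its odd part `ao`
(with `a_{2m+1} = ao m ∈ M (p₁+m+1) p₂ (q-m)`), satisfying `a_0 = a`,
`dr (a_{2m}) = a_{2m+1}` for `0 ≤ m ≤ i-1` and `d0 (a_{2m+2}) = a_{2m+1}` for
`0 ≤ m ≤ i-2`. -/
def IsDSeqR {R V : Type*} [Ring R] [AddCommGroup V] [Module R V]
    (M : ℤ → ℤ → ℤ → Submodule R V) (d0 dr : V →ₗ[R] V)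
    (p₁ p₂ q : ℤ) (i : ℕ) (a : V) (ae ao : ℕ → V) : Prop :=
  ae 0 = a ∧
  (∀ m : ℕ, m < i → ae m ∈ M (p₁ + m) p₂ (q - m)) ∧
  (∀ m : ℕ, m < i → ao m ∈ M (p₁ + m + 1) p₂ (q - m)) ∧
  (∀ m : ℕ, m < i → dr (ae m) = ao m) ∧
  (∀ m : ℕ, m + 1 < i → d0 (ae (m + 1)) = ao m)

/-- A `d_j`-sequence in direction `s` starting at `a ∈ M p₁ p₂ q`; defined analogously to
`IsDSeqR` with `ds` in place of `dr` and the second index in place of the first. -/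
def IsDSeqS {R V : Type*} [Ring R] [AddCommGroup V] [Module R V]
    (M : ℤ → ℤ → ℤ → Submodule R V) (d0 ds : V →ₗ[R] V)
    (p₁ p₂ q : ℤ) (j : ℕ) (a : V) (ae ao : ℕ → V) : Prop :=
  ae 0 = a ∧
  (∀ m : ℕ, m < j → ae m ∈ M p₁ (p₂ + m) (q - m)) ∧
  (∀ m : ℕ, m < j → ao m ∈ M p₁ (p₂ + m + 1) (q - m)) ∧
  (∀ m : ℕ, m < j → ds (ae m) = ao m) ∧
  (∀ m : ℕ, m + 1 < j → d0 (ae (m + 1)) = ao m)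

private lemma mem_congr3 {R V : Type*} [Ring R] [AddCommGroup V] [Module R V]
    (M : ℤ → ℤ → ℤ → Submodule R V) {a b c a' b' c' : ℤ} {x : V}
    (h : x ∈ M a b c) (h1 : a = a') (h2 : b = b') (h3 : c = c') : x ∈ M a' b' c' := by
  subst h1; subst h2; subst h3; exact h

/-- Two `d_i`-sequences in direction `r` with the same starting point have
`d0`-cohomologous endpoints. -/
private lemma dseqR_endpoint_unique {R V : Type*} [Ring R] [AddCommGroup V] [Module R V]
    (M : ℤ → ℤ → ℤ → Submodule R V) (d0 dr : V →ₗ[R] V)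
    (hmr : ∀ p₁ p₂ q : ℤ, ∀ x ∈ M p₁ p₂ q, dr x ∈ M (p₁ + 1) p₂ q)
    (hrr : ∀ x : V, dr (dr x) = 0)
    (h0r : ∀ x : V, d0 (dr x) + dr (d0 x) = 0)
    (p₁ p₂ q : ℤ) (i : ℕ) (hi : 1 ≤ i) (a : V)
    (ae ao ae' ao' : ℕ → V)
    (hA : IsDSeqR M d0 dr p₁ p₂ q i a ae ao)
    (hA' : IsDSeqR M d0 dr p₁ p₂ q i a ae' ao')
    (hex : ∀ m : ℕ, 1 ≤ m → m < i → D0Exact3 M d0 (p₁ + m) p₂) :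
    ∃ y ∈ M (p₁ + i) p₂ (q - i), d0 y = ao (i - 1) - ao' (i - 1) := by
  obtain ⟨hA0, hAem, hAom, hAdr, hAd0⟩ := hA
  obtain ⟨hA0', hAem', hAom', hAdr', hAd0'⟩ := hA'
  have key : ∀ m : ℕ, m < i →
      ∃ w ∈ M (p₁ + m) p₂ (q - m - 1), dr (ae m) - dr (ae' m) = d0 (-(dr w)) := by
    intro m
    induction m with
    | zero =>
      intro _
      refine ⟨0, Submodule.zero_mem _, ?_⟩
      rw [hA0, hA0']
      simp
    | succ m ih =>
      intro hm
      obtain ⟨w, hwmem, hw⟩ := ih (by omega)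
      -- e = ae (m+1) - ae' (m+1)
      have hd0e : d0 (ae (m + 1) - ae' (m + 1) + dr w) = 0 := by
        have h1 : d0 (ae (m + 1)) = ao m := hAd0 m hm
        have h2 : d0 (ae' (m + 1)) = ao' m := hAd0' m hm
        have h3 : ao m - ao' m = d0 (-(dr w)) := by
          rw [← hAdr m (by omega), ← hAdr' m (by omega)]; exact hw
        have : d0 (ae (m + 1)) - d0 (ae' (m + 1)) = -(d0 (dr w)) := by
          rw [h1, h2, h3]; simp
        rw [map_add, map_sub, this]
        abel
      have hmem : ae (m + 1) - ae' (m + 1) + dr w ∈ M (p₁ + (m + 1 : ℕ)) p₂ (q - m - 1) := by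
        refine Submodule.add_mem _ (Submodule.sub_mem _ ?_ ?_) ?_
        · exact mem_congr3 M (hAem (m + 1) hm) rfl rfl (by omega)
        · exact mem_congr3 M (hAem' (m + 1) hm) rfl rfl (by omega)
        · exact mem_congr3 M (hmr _ _ _ w hwmem) (by omega) rfl rfl
      obtain ⟨w', hw'mem, hw'⟩ := hex (m + 1) (by omega) hm (q - m - 1) _ hmem hd0e
      refine ⟨w', mem_congr3 M hw'mem rfl rfl (by omega), ?_⟩
      have he : ae (m + 1) - ae' (m + 1) = d0 w' - dr w := by
        rw [hw']; abel
      rw [← map_sub, he, map_sub, map_neg]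
      have h5 : dr (d0 w') = -(d0 (dr w')) := eq_neg_of_add_eq_zero_right (by
        have := h0r w'; linear_combination (norm := abel) this)
      rw [h5, hrr w]
      abel
  obtain ⟨w, hwmem, hw⟩ := key (i - 1) (by omega)
  refine ⟨-(dr w), ?_, ?_⟩
  · exact Submodule.neg_mem _ (mem_congr3 M (hmr _ _ _ w hwmem) (by omega) rfl (by omega))
  · rw [← hw, hAdr (i-1) (by omega), hAdr' (i-1) (by omega)]

/- The interpolating grid: `gridW m m'` is `w(m,m')` with `w(·,0) = ae`, `w(0,·) = xe`,
and interior entries chosen (when possible) so that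
`d0 w(m+1,m'+1) = dr w(m,m'+1) + ds w(m+1,m')`. -/
open Classical in
noncomputable def gridW {R V : Type*} [Ring R] [AddCommGroup V] [Module R V]
    (M : ℤ → ℤ → ℤ → Submodule R V) (d0 dr ds : V →ₗ[R] V)
    (p₁ p₂ q : ℤ) (ae xe : ℕ → V) : ℕ → ℕ → V :=
  Nat.rec xe (fun m prev => Nat.rec (ae (m + 1)) (fun m' cur =>
    if h : ∃ y ∈ M (p₁ + ((m : ℤ) + 1)) (p₂ + ((m' : ℤ) + 1))
        (q - ((m : ℤ) + 1) - ((m' : ℤ) + 1)), d0 y = dr (prev (m' + 1)) + ds cur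
    then h.choose else 0))

open Classical in
lemma gridW_zero {R V : Type*} [Ring R] [AddCommGroup V] [Module R V]
    (M : ℤ → ℤ → ℤ → Submodule R V) (d0 dr ds : V →ₗ[R] V)
    (p₁ p₂ q : ℤ) (ae xe : ℕ → V) (m' : ℕ) :
    gridW M d0 dr ds p₁ p₂ q ae xe 0 m' = xe m' := rfl

open Classical in
lemma gridW_succ_zero {R V : Type*} [Ring R] [AddCommGroup V] [Module R V]
    (M : ℤ → ℤ → ℤ → Submodule R V) (d0 dr ds : V →ₗ[R] V)
    (p₁ p₂ q : ℤ) (ae xe : ℕ → V) (m : ℕ) :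
    gridW M d0 dr ds p₁ p₂ q ae xe (m + 1) 0 = ae (m + 1) := rfl

open Classical in
lemma gridW_succ_succ {R V : Type*} [Ring R] [AddCommGroup V] [Module R V]
    (M : ℤ → ℤ → ℤ → Submodule R V) (d0 dr ds : V →ₗ[R] V)
    (p₁ p₂ q : ℤ) (ae xe : ℕ → V) (m m' : ℕ) :
    gridW M d0 dr ds p₁ p₂ q ae xe (m + 1) (m' + 1) =
      if h : ∃ y ∈ M (p₁ + ((m : ℤ) + 1)) (p₂ + ((m' : ℤ) + 1))
          (q - ((m : ℤ) + 1) - ((m' : ℤ) + 1)),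
          d0 y = dr (gridW M d0 dr ds p₁ p₂ q ae xe m (m' + 1)) +
            ds (gridW M d0 dr ds p₁ p₂ q ae xe (m + 1) m')
      then h.choose else 0 := rfl

private lemma gridW_spec {R V : Type*} [Ring R] [AddCommGroup V] [Module R V]
    (M : ℤ → ℤ → ℤ → Submodule R V) (d0 dr ds : V →ₗ[R] V)
    (hmr : ∀ p₁ p₂ q : ℤ, ∀ x ∈ M p₁ p₂ q, dr x ∈ M (p₁ + 1) p₂ q)
    (hms : ∀ p₁ p₂ q : ℤ, ∀ x ∈ M p₁ p₂ q, ds x ∈ M p₁ (p₂ + 1) q)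
    (hrr : ∀ x : V, dr (dr x) = 0)
    (hss : ∀ x : V, ds (ds x) = 0)
    (h0r : ∀ x : V, d0 (dr x) + dr (d0 x) = 0)
    (h0s : ∀ x : V, d0 (ds x) + ds (d0 x) = 0)
    (hrs : ∀ x : V, dr (ds x) + ds (dr x) = 0)
    (p₁ p₂ q : ℤ) (i j : ℕ)
    (a : V) (hda : d0 a = 0)
    (ae ao xe xo : ℕ → V)
    (hA : IsDSeqR M d0 dr p₁ p₂ q i a ae ao)
    (hX : IsDSeqS M d0 ds p₁ p₂ q j a xe xo)
    (hex : ∀ m m' : ℕ, m < i → m' < j → ¬(m = 0 ∧ m' = 0) →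
      D0Exact3 M d0 (p₁ + m) (p₂ + m')) :
    ∀ m m', m < i → m' < j →
      gridW M d0 dr ds p₁ p₂ q ae xe m m' ∈ M (p₁ + m) (p₂ + m') (q - m - m') ∧
      d0 (gridW M d0 dr ds p₁ p₂ q ae xe m m') =
        (if m = 0 then 0 else dr (gridW M d0 dr ds p₁ p₂ q ae xe (m - 1) m')) +
        (if m' = 0 then 0 else ds (gridW M d0 dr ds p₁ p₂ q ae xe m (m' - 1))) := by
  obtain ⟨hA0, hAem, hAom, hAdr, hAd0⟩ := hA
  obtain ⟨hX0, hXem, hXom, hXdr, hXd0⟩ := hX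
  suffices H : ∀ n m m', m + m' = n → m < i → m' < j →
      gridW M d0 dr ds p₁ p₂ q ae xe m m' ∈ M (p₁ + m) (p₂ + m') (q - m - m') ∧
      d0 (gridW M d0 dr ds p₁ p₂ q ae xe m m') =
        (if m = 0 then 0 else dr (gridW M d0 dr ds p₁ p₂ q ae xe (m - 1) m')) +
        (if m' = 0 then 0 else ds (gridW M d0 dr ds p₁ p₂ q ae xe m (m' - 1))) by
    exact fun m m' hm hm' => H (m + m') m m' rfl hm hm'
  intro n
  induction n using Nat.strong_induction_on with
  | _ n ih =>
  intro m m' hn hm hm'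
  match m, m' with
  | 0, 0 =>
    refine ⟨mem_congr3 M (hXem 0 hm') (by omega) (by omega) (by omega), ?_⟩
    rw [gridW_zero, hX0]
    simp [hda]
  | 0, m' + 1 =>
    refine ⟨mem_congr3 M (hXem (m' + 1) hm') (by omega) rfl (by omega), ?_⟩
    rw [gridW_zero, hXd0 m' hm']
    rw [← hXdr m' (by omega)]
    simp [gridW_zero]
  | m + 1, 0 =>
    refine ⟨mem_congr3 M (hAem (m + 1) hm) rfl (by omega) (by omega), ?_⟩
    have hWm0 : gridW M d0 dr ds p₁ p₂ q ae xe m 0 = ae m := by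
      cases m with
      | zero => rw [gridW_zero, hX0, ← hA0]
      | succ k => rfl
    rw [gridW_succ_zero, hAd0 m hm, ← hAdr m (by omega)]
    rw [if_neg (Nat.succ_ne_zero m), if_pos (rfl : (0:ℕ) = 0), add_zero]
    simp only [Nat.add_sub_cancel]
    rw [hWm0]
  | m + 1, m' + 1 =>
    obtain ⟨humem, hud0⟩ := ih (m + (m' + 1)) (by omega) m (m' + 1) rfl (by omega) hm'
    obtain ⟨hvmem, hvd0⟩ := ih ((m + 1) + m') (by omega) (m + 1) m' rfl hm (by omega)
    obtain ⟨hwmem, hwd0⟩ := ih (m + m') (by omega) m m' rfl (by omega) (by omega)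
    set u := gridW M d0 dr ds p₁ p₂ q ae xe m (m' + 1) with hu
    set v := gridW M d0 dr ds p₁ p₂ q ae xe (m + 1) m' with hv
    set w := gridW M d0 dr ds p₁ p₂ q ae xe m m' with hw
    have hdru : dr (d0 u) = dr (ds w) := by
      rw [hud0]
      simp only [Nat.add_sub_cancel]
      rw [map_add]
      rcases Nat.eq_zero_or_pos m with h | h
      · subst h; simp; rfl
      · rw [if_neg (show ¬ m = 0 by omega), hrr]
        simp
        rfl
    have hdsv : ds (d0 v) = ds (dr w) := by
      rw [hvd0]
      simp only [Nat.add_sub_cancel]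
      rw [map_add, if_neg (Nat.succ_ne_zero m), ← hw]
      rcases Nat.eq_zero_or_pos m' with h | h
      · subst h; simp
      · rw [if_neg (show ¬ m' = 0 by omega), hss, add_zero]
    have hclosed : d0 (dr u + ds v) = 0 := by
      have e1 : d0 (dr u) = -(dr (d0 u)) := eq_neg_of_add_eq_zero_left (h0r u)
      have e2 : d0 (ds v) = -(ds (d0 v)) := eq_neg_of_add_eq_zero_left (h0s v)
      rw [map_add, e1, e2, hdru, hdsv]
      have := hrs w
      linear_combination (norm := abel) -this
    have hcand : dr u + ds v ∈ M (p₁ + ((m : ℤ) + 1)) (p₂ + ((m' : ℤ) + 1))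
        (q - m - m' - 1) := by
      refine Submodule.add_mem _ ?_ ?_
      · exact mem_congr3 M (hmr _ _ _ u humem) (by omega) (by omega) (by omega)
      · exact mem_congr3 M (hms _ _ _ v hvmem) (by omega) (by omega) (by omega)
    have hEx : ∃ y ∈ M (p₁ + ((m : ℤ) + 1)) (p₂ + ((m' : ℤ) + 1))
        (q - ((m : ℤ) + 1) - ((m' : ℤ) + 1)), d0 y = dr u + ds v := by
      obtain ⟨y, hy1, hy2⟩ := hex (m + 1) (m' + 1) hm hm' (by simp)
        (q - m - m' - 1) (dr u + ds v)
        (mem_congr3 M hcand (by omega) (by omega) rfl) hclosed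
      exact ⟨y, mem_congr3 M hy1 (by omega) (by omega) (by omega), hy2⟩
    have heq : gridW M d0 dr ds p₁ p₂ q ae xe (m + 1) (m' + 1) = hEx.choose := by
      rw [gridW_succ_succ, ← hu, ← hv, dif_pos hEx]
    obtain ⟨hymem, hyd0⟩ := hEx.choose_spec
    constructor
    · rw [heq]
      exact mem_congr3 M hymem (by omega) (by omega) (by omega)
    · rw [heq, hyd0]
      simp only [Nat.add_sub_cancel, if_neg (Nat.succ_ne_zero m), if_neg (Nat.succ_ne_zero m')]
      rfl

/-- Proposition 3.3 of the paper, on the level of cycles: the higher differentials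
anticommute, `d_i^{(r)} d_j^{(s)} + d_j^{(s)} d_i^{(r)} = 0`, on vertical cohomology
classes. Concretely: with `d_i`- and `d_j`-sequences as below, `c_{2i-1} + z_{2j-1}` lies
in the image of `d0 : M (p₁+i) (p₂+j) (q-i-j+1) → M (p₁+i) (p₂+j) (q-i-j+2)`. -/
theorem higher_differentials_anticommute
    {R V : Type*} [Ring R] [AddCommGroup V] [Module R V]
    (M : ℤ → ℤ → ℤ → Submodule R V) (d0 dr ds : V →ₗ[R] V)
    (hm0 : ∀ p₁ p₂ q : ℤ, ∀ x ∈ M p₁ p₂ q, d0 x ∈ M p₁ p₂ (q + 1))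
    (hmr : ∀ p₁ p₂ q : ℤ, ∀ x ∈ M p₁ p₂ q, dr x ∈ M (p₁ + 1) p₂ q)
    (hms : ∀ p₁ p₂ q : ℤ, ∀ x ∈ M p₁ p₂ q, ds x ∈ M p₁ (p₂ + 1) q)
    (h00 : ∀ x : V, d0 (d0 x) = 0)
    (hrr : ∀ x : V, dr (dr x) = 0)
    (hss : ∀ x : V, ds (ds x) = 0)
    (h0r : ∀ x : V, d0 (dr x) + dr (d0 x) = 0)
    (h0s : ∀ x : V, d0 (ds x) + ds (d0 x) = 0)
    (hrs : ∀ x : V, dr (ds x) + ds (dr x) = 0)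
    (p₁ p₂ q : ℤ) (i j : ℕ) (hi : 1 ≤ i) (hj : 1 ≤ j)
    (a : V) (ha : a ∈ M p₁ p₂ q) (hda : d0 a = 0)
    (ae ao : ℕ → V) (hA : IsDSeqR M d0 dr p₁ p₂ q i a ae ao)
    (xe xo : ℕ → V) (hX : IsDSeqS M d0 ds p₁ p₂ q j a xe xo)
    (ce co : ℕ → V)
    (hC : IsDSeqR M d0 dr p₁ (p₂ + j) (q - j + 1) i (xo (j - 1)) ce co)
    (ze zo : ℕ → V)
    (hZ : IsDSeqS M d0 ds (p₁ + i) p₂ (q - i + 1) j (ao (i - 1)) ze zo)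
    (hexact : ∀ m m' : ℕ, m ≤ i → m' ≤ j → ¬(m = 0 ∧ m' = 0) → ¬(m = i ∧ m' = j) →
        D0Exact3 M d0 (p₁ + m) (p₂ + m')) :
    ∃ y ∈ M (p₁ + i) (p₂ + j) (q - i - j + 1), d0 y = co (i - 1) + zo (j - 1) := by
    classical
  set W := gridW M d0 dr ds p₁ p₂ q ae xe with hWdef
  have spec := gridW_spec M d0 dr ds hmr hms hrr hss h0r h0s hrs p₁ p₂ q i j a hda ae ao xe xo
    hA hX (fun m m' hm hm' hne =>
      hexact m m' (by omega) (by omega) hne (by rintro ⟨h1, h2⟩; omega))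
  simp only [← hWdef] at spec
  -- the right-edge sequence E
  have hWc0 : ∀ m : ℕ, W m 0 = ae m := by
    intro m
    cases m with
    | zero => show xe 0 = ae 0; rw [hX.1, hA.1]
    | succ k => rfl
  have hEd0 : ∀ m', m' + 1 < j →
      d0 (dr (W (i - 1) (m' + 1))) = ds (dr (W (i - 1) m')) := by
    intro m' hm'
    have hd := (spec (i - 1) (m' + 1) (by omega) hm').2
    have e1 : d0 (dr (W (i - 1) (m' + 1))) = -(dr (d0 (W (i - 1) (m' + 1)))) :=
      eq_neg_of_add_eq_zero_left (h0r _)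
    rw [e1, hd]
    simp only [Nat.add_sub_cancel, if_neg (Nat.succ_ne_zero m')]
    rw [map_add]
    have h1 : dr (if i - 1 = 0 then 0 else dr (W (i - 1 - 1) (m' + 1))) = 0 := by
      rcases Nat.eq_zero_or_pos (i - 1) with h | h
      · rw [if_pos h, map_zero]
      · rw [if_neg (show ¬ i - 1 = 0 by omega), hrr]
    rw [h1, zero_add]
    have := hrs (W (i - 1) m')
    linear_combination (norm := abel) -this
  have hFd0 : ∀ m, m + 1 < i →
      d0 (ds (W (m + 1) (j - 1))) = dr (ds (W m (j - 1))) := by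
    intro m hm
    have hd := (spec (m + 1) (j - 1) hm (by omega)).2
    have e1 : d0 (ds (W (m + 1) (j - 1))) = -(ds (d0 (W (m + 1) (j - 1)))) :=
      eq_neg_of_add_eq_zero_left (h0s _)
    rw [e1, hd]
    simp only [Nat.add_sub_cancel, if_neg (Nat.succ_ne_zero m)]
    rw [map_add]
    have h1 : ds (if j - 1 = 0 then 0 else ds (W (m + 1) (j - 1 - 1))) = 0 := by
      rcases Nat.eq_zero_or_pos (j - 1) with h | h
      · rw [if_pos h, map_zero]
      · rw [if_neg (show ¬ j - 1 = 0 by omega), hss]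
    rw [h1, add_zero]
    have := hrs (W m (j - 1))
    linear_combination (norm := abel) -this
  have hE : IsDSeqS M d0 ds (p₁ + i) p₂ (q - i + 1) j (ao (i - 1))
      (fun m' => dr (W (i - 1) m')) (fun m' => ds (dr (W (i - 1) m'))) := by
    refine ⟨?_, ?_, ?_, fun m' _ => rfl, ?_⟩
    · show dr (W (i - 1) 0) = ao (i - 1)
      rw [hWc0, hA.2.2.2.1 (i - 1) (by omega)]
    · intro m' hm'
      exact mem_congr3 M (hmr _ _ _ _ (spec (i - 1) m' (by omega) hm').1)
        (by omega) rfl (by omega)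
    · intro m' hm'
      exact mem_congr3 M (hms _ _ _ _ (hmr _ _ _ _ (spec (i - 1) m' (by omega) hm').1))
        (by omega) rfl (by omega)
    · exact hEd0
  have hF : IsDSeqR M d0 dr p₁ (p₂ + j) (q - j + 1) i (xo (j - 1))
      (fun m => ds (W m (j - 1))) (fun m => dr (ds (W m (j - 1)))) := by
    refine ⟨?_, ?_, ?_, fun m _ => rfl, ?_⟩
    · exact hX.2.2.2.1 (j - 1) (by omega)
    · intro m hm
      exact mem_congr3 M (hms _ _ _ _ (spec m (j - 1) hm (by omega)).1)
        rfl (by omega) (by omega)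
    · intro m hm
      exact mem_congr3 M (hmr _ _ _ _ (hms _ _ _ _ (spec m (j - 1) hm (by omega)).1))
        rfl (by omega) (by omega)
    · exact hFd0
  obtain ⟨y₂, hy₂mem, hy₂⟩ := dseqR_endpoint_unique M d0 dr hmr hrr h0r
    p₁ (p₂ + j) (q - j + 1) i hi (xo (j - 1)) ce co _ _ hC hF
    (fun m h1 h2 => hexact m j (by omega) le_rfl (by rintro ⟨h, -⟩; omega)
      (by rintro ⟨h, -⟩; omega))
  have hZ2 : IsDSeqR (fun b a' c => M a' b c) d0 ds p₂ (p₁ + i) (q - i + 1) j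
      (ao (i - 1)) ze zo := hZ
  have hE2 : IsDSeqR (fun b a' c => M a' b c) d0 ds p₂ (p₁ + i) (q - i + 1) j
      (ao (i - 1)) (fun m' => dr (W (i - 1) m')) (fun m' => ds (dr (W (i - 1) m'))) := hE
  obtain ⟨y₁, hy₁mem, hy₁⟩ := dseqR_endpoint_unique (fun b a' c => M a' b c) d0 ds
    (fun b a' c x hx => hms a' b c x hx) hss h0s
    p₂ (p₁ + i) (q - i + 1) j hj (ao (i - 1)) ze zo _ _ hZ2 hE2
    (fun m' h1 h2 => hexact i m' le_rfl (by omega) (by rintro ⟨h, -⟩; omega)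
      (by rintro ⟨-, h⟩; omega))
  refine ⟨y₁ + y₂, ?_, ?_⟩
  · refine Submodule.add_mem _ ?_ ?_
    · exact mem_congr3 M hy₁mem rfl rfl (by ring)
    · exact mem_congr3 M hy₂mem rfl rfl (by ring)
  · rw [map_add, hy₁, hy₂]
    have hEoF : ds (dr (W (i - 1) (j - 1))) + dr (ds (W (i - 1) (j - 1))) = 0 := by
      have := hrs (W (i - 1) (j - 1))
      linear_combination (norm := abel) this
    show zo (j - 1) - ds (dr (W (i - 1) (j - 1))) + (co (i - 1) - dr (ds (W (i - 1) (j - 1))))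
      = co (i - 1) + zo (j - 1)
    linear_combination (norm := abel) -hEoF
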